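/- For any nonempty quasi-order (Q,≤_Q), if Q is a well-quasi-order, then the quasi-order (T_f(Q), ≤_T) of finite leaf-labelled trees over Q ordered by tree homomorphisms is also a well-quasi-order. -/

import Mathlib

universe u v

open Ordinal

/-- A quasi-order: a reflexive transitive binary relation. -/
def IsQO {Q : Type u} (le : Q → Q → Prop) : Prop :=
  Reflexive le ∧ Transitive le

/-- A well-quasi-order: a quasi-order in which every infinite sequence of elements
contains a weakly increasing pair. -/
def IsWQO {Q : Type u} (le : Q → Q → Prop) : Prop :=
  IsQO le ∧ ∀ f : ℕ → Q, ∃ i j : ℕ, i < j ∧ le (f i) (f j)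

/-- Finite leaf-labelled trees over `Q`: leaves carry labels from `Q`, and an internal
node carries a finite nonempty list of children (encoded as a head child plus the list
of remaining children). -/
inductive LTree (Q : Type u) : Type u
  | leaf : Q → LTree Q
  | node : LTree Q → List (LTree Q) → LTree Q

mutual
/-- The tree-homomorphism quasi-order `≤_T` on finite leaf-labelled trees:
`·x ≤_T ·y` iff `le x y`; `·x ≤_T ·(τ₀,…,τ_{l-1})` iff `·x ≤_T τ_j` for some `j < l`;
`·(σ₀,…,σ_{k-1}) ≤_T ·(τ₀,…,τ_{l-1})` iff for every `i < k` there is `j < l` with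
`σᵢ ≤_T τ_j`; and `·(σ₀,…,σ_{k-1}) ≤_T ·y` never holds. -/
inductive TreeLE {Q : Type u} (le : Q → Q → Prop) : LTree Q → LTree Q → Prop
  | leaf {x y : Q} : le x y → TreeLE le (.leaf x) (.leaf y)
  | leafNode {x : Q} {t : LTree Q} {ts : List (LTree Q)} :
      TreeMemLE le (.leaf x) (t :: ts) → TreeLE le (.leaf x) (.node t ts)
  | node {s t : LTree Q} {ss ts : List (LTree Q)} :
      TreeAllLE le (s :: ss) (t :: ts) → TreeLE le (.node s ss) (.node t ts)

/-- `TreeMemLE le a l` means `∃ b ∈ l, TreeLE le a b`. -/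
inductive TreeMemLE {Q : Type u} (le : Q → Q → Prop) : LTree Q → List (LTree Q) → Prop
  | head {a b : LTree Q} {l : List (LTree Q)} : TreeLE le a b → TreeMemLE le a (b :: l)
  | tail {a b : LTree Q} {l : List (LTree Q)} : TreeMemLE le a l → TreeMemLE le a (b :: l)

/-- `TreeAllLE le l₁ l₂` means `∀ a ∈ l₁, ∃ b ∈ l₂, TreeLE le a b`. -/
inductive TreeAllLE {Q : Type u} (le : Q → Q → Prop) : List (LTree Q) → List (LTree Q) → Prop
  | nil {l : List (LTree Q)} : TreeAllLE le [] l
  | cons {a : LTree Q} {l₁ l₂ : List (LTree Q)} :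
      TreeMemLE le a l₂ → TreeAllLE le l₁ l₂ → TreeAllLE le (a :: l₁) l₂
end

namespace LTree

/-- The list of children of a tree. -/
def children {Q : Type u} : LTree Q → List (LTree Q)
  | .leaf _ => []
  | .node t ts => t :: ts

theorem sizeOf_pos {Q : Type u} (t : LTree Q) : 0 < sizeOf t := by
  cases t <;> simp

theorem sizeOf_lt_of_mem_children {Q : Type u} {s t : LTree Q} (h : s ∈ t.children) :
    sizeOf s < sizeOf t := by
  cases t with
  | leaf x => simp [children] at h
  | node u us =>
    simp only [children, List.mem_cons] at h
    rcases h with rfl | h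
    · simp; omega
    · have := List.sizeOf_lt_of_mem h
      simp; omega

end LTree

section TreeLELemmas

variable {Q : Type u} {le : Q → Q → Prop}

theorem treeMemLE_exists {a : LTree Q} {l : List (LTree Q)} (h : TreeMemLE le a l) :
    ∃ b ∈ l, TreeLE le a b := by
  induction l with
  | nil => cases h
  | cons c l ih =>
    cases h with
    | head h => exact ⟨c, List.mem_cons_self, h⟩
    | tail h =>
      obtain ⟨b, hb, hab⟩ := ih h
      exact ⟨b, List.mem_cons_of_mem _ hb, hab⟩

theorem treeMemLE_of_mem {a b : LTree Q} {l : List (LTree Q)} (hab : TreeLE le a b)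
    (hb : b ∈ l) : TreeMemLE le a l := by
  induction l with
  | nil => simp at hb
  | cons c l ih =>
    rcases List.mem_cons.1 hb with rfl | hb
    · exact .head hab
    · exact .tail (ih hb)

theorem treeAllLE_forall {l₁ l₂ : List (LTree Q)} (h : TreeAllLE le l₁ l₂) :
    ∀ a ∈ l₁, TreeMemLE le a l₂ := by
  induction l₁ with
  | nil => simp
  | cons c l ih =>
    cases h with
    | cons hm hall =>
      intro a ha
      rcases List.mem_cons.1 ha with rfl | ha
      · exact hm
      · exact ih hall a ha

theorem treeAllLE_of_forall {l₁ l₂ : List (LTree Q)} (h : ∀ a ∈ l₁, TreeMemLE le a l₂) :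
    TreeAllLE le l₁ l₂ := by
  induction l₁ with
  | nil => exact .nil
  | cons a l ih =>
    exact .cons (h a (List.mem_cons_self)) (ih fun b hb => h b (List.mem_cons_of_mem _ hb))

theorem treeLE_refl (hr : Reflexive le) : ∀ t : LTree Q, TreeLE le t t := by
  have key : ∀ p : ℕ, ∀ t : LTree Q, sizeOf t ≤ p → TreeLE le t t := by
    intro p
    induction p with
    | zero => intro t ht; exact absurd ht (by have := t.sizeOf_pos; omega)
    | succ p ih =>
      intro t ht
      cases t with
      | leaf x => exact .leaf (hr x)
      | node u us =>
        refine .node (treeAllLE_of_forall fun a ha => treeMemLE_of_mem ?_ ha)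
        have hlt : sizeOf a < sizeOf (LTree.node u us) :=
          LTree.sizeOf_lt_of_mem_children (by simpa [LTree.children] using ha)
        exact ih a (by omega)
  exact fun t => key (sizeOf t) t le_rfl

theorem treeLE_trans (ht : Transitive le) :
    ∀ {a b c : LTree Q}, TreeLE le a b → TreeLE le b c → TreeLE le a c := by
  have key : ∀ p : ℕ, ∀ b c : LTree Q, sizeOf b + sizeOf c ≤ p →
      ∀ a : LTree Q, TreeLE le a b → TreeLE le b c → TreeLE le a c := by
    intro p
    induction p with
    | zero => intro b c hbc; exact absurd hbc (by have := b.sizeOf_pos; omega)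
    | succ p ih =>
      intro b c hbc a hab hbc'
      cases hbc' with
      | leaf hyz =>
        cases hab with
        | leaf hxy => exact .leaf (ht hxy hyz)
      | @leafNode y u us hmem =>
        cases hab with
        | @leaf x _ hxy =>
          obtain ⟨d, hd, hyd⟩ := treeMemLE_exists hmem
          have hdlt : sizeOf d < sizeOf (LTree.node u us) :=
            LTree.sizeOf_lt_of_mem_children (by simpa [LTree.children] using hd)
          have hxd : TreeLE le (.leaf x) d :=
            ih (.leaf y) d (by omega) (.leaf x) (.leaf hxy) hyd
          exact .leafNode (treeMemLE_of_mem hxd hd)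
      | @node u v us vs hall =>
        cases hab with
        | @leafNode x _ _ hmem =>
          obtain ⟨d, hd, hxd⟩ := treeMemLE_exists hmem
          obtain ⟨e, he, hde⟩ := treeMemLE_exists (treeAllLE_forall hall d hd)
          have hdlt : sizeOf d < sizeOf (LTree.node u us) :=
            LTree.sizeOf_lt_of_mem_children (by simpa [LTree.children] using hd)
          have helt : sizeOf e < sizeOf (LTree.node v vs) :=
            LTree.sizeOf_lt_of_mem_children (by simpa [LTree.children] using he)
          have : TreeLE le (.leaf x) e := ih d e (by omega) _ hxd hde
          exact .leafNode (treeMemLE_of_mem this he)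
        | @node s _ ss _ hall' =>
          refine .node (treeAllLE_of_forall fun α hα => ?_)
          obtain ⟨d, hd, hαd⟩ := treeMemLE_exists (treeAllLE_forall hall' α hα)
          obtain ⟨e, he, hde⟩ := treeMemLE_exists (treeAllLE_forall hall d hd)
          have hdlt : sizeOf d < sizeOf (LTree.node u us) :=
            LTree.sizeOf_lt_of_mem_children (by simpa [LTree.children] using hd)
          have helt : sizeOf e < sizeOf (LTree.node v vs) :=
            LTree.sizeOf_lt_of_mem_children (by simpa [LTree.children] using he)
          exact treeMemLE_of_mem (ih d e (by omega) α hαd hde) he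
  exact fun {a b c} hab hbc => key (sizeOf b + sizeOf c) b c le_rfl a hab hbc

/-- Every child of a tree is `≤_T` the tree itself. -/
theorem treeLE_of_mem_children (hr : Reflexive le) :
    ∀ {s t : LTree Q}, s ∈ t.children → TreeLE le s t := by
  have key : ∀ p : ℕ, ∀ t : LTree Q, sizeOf t ≤ p → ∀ s ∈ t.children, TreeLE le s t := by
    intro p
    induction p with
    | zero => intro t h; exact absurd h (by have := t.sizeOf_pos; omega)
    | succ p ih =>
      intro t ht s hs
      cases t with
      | leaf x => simp [LTree.children] at hs
      | node u us =>
        have hslt : sizeOf s < sizeOf (LTree.node u us) := LTree.sizeOf_lt_of_mem_children hs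
        simp only [LTree.children] at hs
        cases s with
        | leaf x => exact .leafNode (treeMemLE_of_mem (.leaf (hr x)) hs)
        | node v vs =>
          refine .node (treeAllLE_of_forall fun a ha => ?_)
          have halt : sizeOf a < sizeOf (LTree.node v vs) :=
            LTree.sizeOf_lt_of_mem_children (by simpa [LTree.children] using ha)
          have : TreeLE le a (.node v vs) :=
            ih (.node v vs) (by omega) a (by simpa [LTree.children] using ha)
          exact treeMemLE_of_mem this hs
  exact fun {s t} hs => key (sizeOf t) t le_rfl s hs

theorem treeAllLE_weaken {l₁ l₂ : List (LTree Q)} {b : LTree Q} (h : TreeAllLE le l₁ l₂) :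
    TreeAllLE le l₁ (b :: l₂) := by
  induction l₁ with
  | nil => exact .nil
  | cons c l ih =>
    cases h with
    | cons hm hall => exact .cons (.tail hm) (ih hall)

theorem treeAllLE_of_sublistForall₂ {l₁ l₂ : List (LTree Q)}
    (h : List.SublistForall₂ (TreeLE le) l₁ l₂) : TreeAllLE le l₁ l₂ := by
  induction h with
  | nil => exact .nil
  | cons hab _ ih => exact .cons (.head hab) (treeAllLE_weaken ih)
  | cons_right _ ih => exact treeAllLE_weaken ih

end TreeLELemmas

/-- For any nonempty quasi-order `(Q, ≤_Q)`, if `Q` is a well-quasi-order, then the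
quasi-order `(T_f(Q), ≤_T)` of finite leaf-labelled trees over `Q` ordered by tree
homomorphisms is also a well-quasi-order. -/
theorem isWQO_treeLE {Q : Type u} [Nonempty Q]
    (le : Q → Q → Prop) (hwqo : IsWQO le) :
    IsWQO (TreeLE le) := by
  classical
  obtain ⟨⟨hrefl, htrans⟩, hseq⟩ := hwqo
  have hRrefl : Reflexive (TreeLE le) := fun t => treeLE_refl hrefl t
  have hRtrans : Transitive (TreeLE le) := fun a b c hab hbc => treeLE_trans htrans hab hbc
  refine ⟨⟨hRrefl, hRtrans⟩, ?_⟩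
  by_contra hcon
  push_neg at hcon
  obtain ⟨f0, hf0⟩ := hcon
  -- obtain a minimal bad sequence
  obtain ⟨M, hMbad, hMmin⟩ :=
    Set.PartiallyWellOrderedOn.exists_min_bad_of_exists_bad (TreeLE le) sizeOf Set.univ
      ⟨f0, fun _ => Set.mem_univ _, fun m n hmn => hf0 m n hmn⟩
  -- eventually all terms are nodes
  have hleaffin : ∃ N : ℕ, ∀ n, N ≤ n → ∀ x : Q, M n ≠ .leaf x := by
    by_contra h
    push_neg at h
    have hfreq : ∃ᶠ n in Filter.atTop, ∃ x : Q, M n = .leaf x := by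
      rw [Filter.frequently_atTop]
      intro N
      obtain ⟨n, hn, x, hx⟩ := h N
      exact ⟨n, hn, x, hx⟩
    obtain ⟨φ, hφmono, hφ⟩ := Filter.extraction_of_frequently_atTop hfreq
    obtain ⟨i, j, hij, hle⟩ := hseq fun k => (hφ k).choose
    refine hMbad.2 (φ i) (φ j) (hφmono hij) ?_
    rw [(hφ i).choose_spec, (hφ j).choose_spec]
    exact .leaf hle
  obtain ⟨N, hN⟩ := hleaffin
  -- the set of children of the tail of the minimal bad sequence is pwo
  set C : Set (LTree Q) := {s | ∃ n, N ≤ n ∧ s ∈ (M n).children} with hCdef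
  have hC : C.PartiallyWellOrderedOn (TreeLE le) := by
    suffices H : ∀ g : ℕ → LTree Q, (∀ n, g n ∈ C) → ∃ m n, m < n ∧ TreeLE le (g m) (g n) from
      fun g' => H (fun n => (g' n).1) (fun n => (g' n).2)
    intro g hg
    by_contra hg'
    push_neg at hg'
    choose nn hnnN hnn using hg
    obtain ⟨m, ⟨k, hk⟩, hmin⟩ := Nat.lt_wfRel.wf.has_min (Set.range nn) ⟨nn 0, 0, rfl⟩
    have hkmin : ∀ i, nn k ≤ nn i := by
      intro i
      have := hmin (nn i) ⟨i, rfl⟩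
      rw [hk] at *
      exact not_lt.1 this
    set h : ℕ → LTree Q := fun p => if p < nn k then M p else g (p - nn k + k) with hhdef
    have hhbad : Set.PartiallyWellOrderedOn.IsBadSeq (TreeLE le) Set.univ h := by
      refine ⟨fun _ => Set.mem_univ _, ?_⟩
      intro p q hpq hR
      by_cases hq : q < nn k
      · have hp : p < nn k := hpq.trans hq
        simp only [hhdef, if_pos hp, if_pos hq] at hR
        exact hMbad.2 p q hpq hR
      · by_cases hp : p < nn k
        · simp only [hhdef, if_pos hp, if_neg hq] at hR
          set i := q - nn k + k
          have hRM : TreeLE le (M p) (M (nn i)) :=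
            hRtrans hR (treeLE_of_mem_children hrefl (hnn i))
          exact hMbad.2 p (nn i) (lt_of_lt_of_le hp (hkmin i)) hRM
        · simp only [hhdef, if_neg hp, if_neg hq] at hR
          have : p - nn k + k < q - nn k + k := by omega
          exact hg' _ _ this hR
    refine hMmin (nn k) h (fun m hm => by simp [hhdef, if_pos hm]) ?_ hhbad
    have hnk : h (nn k) = g k := by simp [hhdef]
    rw [hnk]
    exact LTree.sizeOf_lt_of_mem_children (hnn k)
  -- apply Higman's lemma
  haveI : IsRefl (LTree Q) (TreeLE le) := ⟨hRrefl⟩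
  haveI : IsTrans (LTree Q) (TreeLE le) := ⟨fun a b c hab hbc => hRtrans hab hbc⟩
  haveI : IsPreorder (LTree Q) (TreeLE le) :=
    { refl := hRrefl, trans := fun a b c hab hbc => hRtrans hab hbc }
  have hHig := hC.partiallyWellOrderedOn_sublistForall₂
  obtain ⟨i, j, hij, hsf⟩ := hHig (fun k => ⟨(M (N + k)).children,
    (fun x hx => ⟨N + k, Nat.le_add_right _ _, hx⟩)⟩)
  have hi := hN (N + i) (Nat.le_add_right _ _)
  have hj := hN (N + j) (Nat.le_add_right _ _)
  refine hMbad.2 (N + i) (N + j) (by omega) ?_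
  cases hMi : M (N + i) with
  | leaf x => exact absurd hMi (hi x)
  | node u us =>
    cases hMj : M (N + j) with
    | leaf y => exact absurd hMj (hj y)
    | node v vs =>
      refine .node (treeAllLE_of_sublistForall₂ ?_)
      have : List.SublistForall₂ (TreeLE le) (M (N + i)).children (M (N + j)).children := hsf
      rw [hMi, hMj] at this
      simpa [LTree.children] using this
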